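/- For real x with 0 < x < 1, the antiderivative identity holds: d/dx [−2x + 2√(1−x²)·arcsin(x) + x·arcsin(x)²] = arcsin(x)², and consequently −2x + 2√(1−x²)·arcsin(x) + x·arcsin(x)² = (1/2) ∑_{n≥0} 4^{n+1} x^{2n+3} / ((2n+3)(2n+2)(2n+1) binom(2n,n)). -/

import Mathlib

open Real

noncomputable def bc (n : ℕ) : ℝ := 4 ^ n / ((2 * n + 1) * Nat.centralBinom n)

lemma cb_pos (n : ℕ) : (0:ℝ) < Nat.centralBinom n := by
  exact_mod_cast Nat.centralBinom_pos n

lemma bc_pos (n : ℕ) : 0 < bc n := by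
  have := cb_pos n
  unfold bc; positivity

lemma bc_zero : bc 0 = 1 := by simp [bc, Nat.centralBinom]

lemma bc_rec (n : ℕ) : (2 * n + 3) * bc (n + 1) = (2 * n + 2) * bc n := by
  have h : ((n:ℝ) + 1) * Nat.centralBinom (n+1) = 2 * (2 * n + 1) * Nat.centralBinom n := by
    exact_mod_cast Nat.succ_mul_centralBinom_succ n
  have h1 := cb_pos n
  have h2 := cb_pos (n+1)
  unfold bc
  push_cast
  have hc1 : ((2:ℝ) * (↑n + 1) + 1) * ↑(n + 1).centralBinom ≠ 0 := by positivity
  have hc0 : ((2:ℝ) * ↑n + 1) * ↑n.centralBinom ≠ 0 := by positivity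
  have key : (4:ℝ) * (2*n+1) * Nat.centralBinom n = (2*n+2) * Nat.centralBinom (n+1) := by
    linear_combination (-2 : ℝ) * h
  field_simp
  linear_combination ((2*(n:ℝ)+3) * 4^n) * key

lemma bc_le_one (n : ℕ) : bc n ≤ 1 := by
  induction n with
  | zero => simp [bc_zero]
  | succ n ih =>
    have h := bc_rec n
    have hp := bc_pos n
    nlinarith [bc_pos (n+1)]

noncomputable def ac (n : ℕ) : ℝ :=
  4 ^ (n + 1) / ((2 * n + 3) * (2 * n + 2) * (2 * n + 1) * Nat.centralBinom n)

lemma ac_pos (n : ℕ) : 0 < ac n := by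
  have := cb_pos n
  unfold ac; positivity

lemma ac_mul (n : ℕ) : (2 * (n:ℝ) + 3) * (2 * n + 2) * ac n = 4 * bc n := by
  have h1 := cb_pos n
  unfold ac bc
  field_simp
  ring

lemma ac_le_one (n : ℕ) : ac n ≤ 1 := by
  have h := ac_mul n
  have hb := bc_le_one n
  have hbp := bc_pos n
  have hp : (0:ℝ) < (2 * (n:ℝ) + 3) * (2 * n + 2) := by positivity
  nlinarith [ac_pos n]

-- first coefficient of the derivative series
lemma mac_le (n : ℕ) : (2 * (n:ℝ) + 3) * ac n ≤ 2 := by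
  have h := ac_mul n
  have hb := bc_le_one n
  have hbp := bc_pos n
  have hap := ac_pos n
  nlinarith

lemma summable_aux {q : ℝ} (hq0 : 0 ≤ q) (hq1 : q < 1) (A B : ℝ) :
    Summable (fun n : ℕ => (A * n + B) * q ^ n) := by
  have hq : ‖q‖ < 1 := by rwa [Real.norm_eq_abs, abs_of_nonneg hq0]
  have h1 := summable_pow_mul_geometric_of_norm_lt_one (R := ℝ) 1 hq
  have h0 := summable_geometric_of_lt_one hq0 hq1
  refine ((h1.mul_left A).add (h0.mul_left B)).congr fun n => ?_
  simp [pow_one]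
  ring

lemma hasDerivAt_ps (c : ℕ → ℝ) (C : ℝ) (hC : ∀ n, |c n| ≤ C) (k : ℕ) {y : ℝ} (hy : |y| < 1) :
    HasDerivAt (fun t : ℝ => ∑' n, c n * t ^ (2 * n + k + 1))
      (∑' n : ℕ, (2 * (n:ℝ) + k + 1) * c n * y ^ (2 * n + k)) y := by
  set r : ℝ := (|y| + 1) / 2 with hr
  have hy0 : 0 ≤ |y| := abs_nonneg y
  have hr0 : 0 < r := by positivity
  have hr1 : r < 1 := by rw [hr]; linarith
  have hyr : |y| < r := by rw [hr]; linarith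
  have hC0 : 0 ≤ C := le_trans (abs_nonneg _) (hC 0)
  refine hasDerivAt_tsum_of_isPreconnected
    (u := fun n : ℕ => ((2 * C) * n + ((k:ℝ) + 1) * C) * (r ^ 2) ^ n)
    (t := Metric.ball (0:ℝ) r) (y₀ := (0:ℝ))
    (g := fun (n : ℕ) (t : ℝ) => c n * t ^ (2 * n + k + 1))
    (g' := fun (n : ℕ) (z : ℝ) => (2 * (n:ℝ) + k + 1) * c n * z ^ (2 * n + k))
    ?_ Metric.isOpen_ball (convex_ball (0:ℝ) r).isPreconnected ?_ ?_ ?_ ?_ ?_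
  · exact summable_aux (by positivity) (by nlinarith) _ _
  · intro n z _
    have h := (hasDerivAt_pow (2 * n + k + 1) z).const_mul (c n)
    have e : 2 * n + k + 1 - 1 = 2 * n + k := by omega
    rw [e] at h
    refine h.congr_deriv (Eq.symm ?_)
    push_cast
    ring
  · intro n z hz
    rw [Metric.mem_ball, dist_zero_right, Real.norm_eq_abs] at hz
    rw [Real.norm_eq_abs, abs_mul, abs_mul]
    have h1 : |z ^ (2 * n + k)| ≤ r ^ (2 * n) := by
      rw [abs_pow]
      calc |z| ^ (2 * n + k) ≤ r ^ (2 * n + k) := pow_le_pow_left₀ (abs_nonneg z) hz.le _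
        _ ≤ r ^ (2 * n) := pow_le_pow_of_le_one hr0.le hr1.le (by omega)
    have h2 : |(2 * (n:ℝ) + k + 1)| = 2 * (n:ℝ) + k + 1 := abs_of_nonneg (by positivity)
    calc |2 * (n:ℝ) + (k:ℝ) + 1| * |c n| * |z ^ (2 * n + k)|
        ≤ (2 * (n:ℝ) + k + 1) * C * r ^ (2 * n) := by
          rw [h2]
          exact mul_le_mul (mul_le_mul_of_nonneg_left (hC n) (by positivity)) h1
            (abs_nonneg _) (by positivity)
      _ = ((2 * C) * n + ((k:ℝ) + 1) * C) * (r ^ 2) ^ n := by rw [← pow_mul]; ring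
  · exact Metric.mem_ball_self hr0
  · have : (fun n : ℕ => c n * (0:ℝ) ^ (2 * n + k + 1)) = fun _ => 0 := by
      funext n; simp [pow_succ]
    rw [this]; exact summable_zero
  · rwa [Metric.mem_ball, dist_zero_right, Real.norm_eq_abs]

noncomputable def Gf (t : ℝ) : ℝ := ∑' n : ℕ, ac n * t ^ (2*n+3)
noncomputable def G1f (t : ℝ) : ℝ := ∑' n : ℕ, (2*(n:ℝ)+3) * ac n * t ^ (2*n+2)
noncomputable def G2f (t : ℝ) : ℝ := ∑' n : ℕ, 4 * bc n * t ^ (2*n+1)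
noncomputable def G3f (t : ℝ) : ℝ := ∑' n : ℕ, 4 * (2*(n:ℝ)+1) * bc n * t ^ (2*n)

lemma hasDerivAt_Gf {y : ℝ} (hy : |y| < 1) : HasDerivAt Gf (G1f y) y := by
  have h := hasDerivAt_ps ac 1 (fun n => by
    rw [abs_of_pos (ac_pos n)]; exact ac_le_one n) 2 hy
  have e1 : (fun t : ℝ => ∑' n : ℕ, ac n * t ^ (2*n+2+1)) = Gf := by
    funext t; unfold Gf; exact tsum_congr fun n => by norm_num
  have e2 : (∑' n : ℕ, (2*(n:ℝ)+(2:ℕ)+1) * ac n * y ^ (2*n+2)) = G1f y := by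
    unfold G1f; exact tsum_congr fun n => by push_cast; ring
  rw [e1, e2] at h
  exact h

lemma hasDerivAt_G1f {y : ℝ} (hy : |y| < 1) : HasDerivAt G1f (G2f y) y := by
  have hcb : ∀ n : ℕ, |(2*(n:ℝ)+3) * ac n| ≤ 2 := fun n => by
    rw [abs_of_pos (by have := ac_pos n; positivity)]; exact mac_le n
  have h := hasDerivAt_ps (fun n => (2*(n:ℝ)+3) * ac n) 2 hcb 1 hy
  have e1 : (fun t : ℝ => ∑' n : ℕ, (2*(n:ℝ)+3) * ac n * t ^ (2*n+1+1)) = G1f := by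
    funext t; unfold G1f; exact tsum_congr fun n => by norm_num
  have e2 : (∑' n : ℕ, (2*(n:ℝ)+(1:ℕ)+1) * ((2*(n:ℝ)+3) * ac n) * y ^ (2*n+1)) = G2f y := by
    unfold G2f
    refine tsum_congr fun n => ?_
    have h := ac_mul n
    push_cast
    linear_combination y ^ (2*n+1) * h
  rw [e1, e2] at h
  exact h

lemma hasDerivAt_G2f {y : ℝ} (hy : |y| < 1) : HasDerivAt G2f (G3f y) y := by
  have hcb : ∀ n : ℕ, |4 * bc n| ≤ 4 := fun n => by
    rw [abs_of_pos (by have := bc_pos n; positivity)]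
    nlinarith [bc_le_one n, bc_pos n]
  have h := hasDerivAt_ps (fun n => 4 * bc n) 4 hcb 0 hy
  have e1 : (fun t : ℝ => ∑' n : ℕ, 4 * bc n * t ^ (2*n+0+1)) = G2f := by
    funext t; unfold G2f; exact tsum_congr fun n => by norm_num
  have e2 : (∑' n : ℕ, (2*(n:ℝ)+(0:ℕ)+1) * (4 * bc n) * y ^ (2*n+0)) = G3f y := by
    unfold G3f; exact tsum_congr fun n => by push_cast; ring_nf
  rw [e1, e2] at h
  exact h

lemma sq_lt_one {y : ℝ} (hy : |y| < 1) : y ^ 2 < 1 := by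
  nlinarith [sq_abs y, abs_nonneg y]

lemma summable_G2 {y : ℝ} (hy : |y| < 1) :
    Summable (fun n : ℕ => 4 * bc n * y ^ (2*n+1)) := by
  refine Summable.of_norm_bounded
    (summable_aux (q := y^2) (by positivity) (sq_lt_one hy) 0 4) ?_
  intro n
  rw [Real.norm_eq_abs, abs_mul, abs_mul]
  have h1 : |y ^ (2*n+1)| ≤ (y^2)^n := by
    rw [abs_pow]
    calc |y| ^ (2*n+1) ≤ |y| ^ (2*n) := by
          exact pow_le_pow_of_le_one (abs_nonneg y) hy.le (by omega)
      _ = (y^2)^n := by rw [← sq_abs, ← pow_mul]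
  have h2 : |bc n| ≤ 1 := by rw [abs_of_pos (bc_pos n)]; exact bc_le_one n
  calc |(4:ℝ)| * |bc n| * |y ^ (2*n+1)| ≤ 4 * 1 * (y^2)^n := by
        rw [abs_of_pos (by norm_num : (0:ℝ) < 4)]
        exact mul_le_mul (mul_le_mul_of_nonneg_left h2 (by norm_num)) h1 (abs_nonneg _) (by norm_num)
    _ = (0 * n + 4) * (y^2)^n := by ring

lemma summable_G3 {y : ℝ} (hy : |y| < 1) :
    Summable (fun n : ℕ => 4 * (2*(n:ℝ)+1) * bc n * y ^ (2*n)) := by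
  refine Summable.of_norm_bounded
    (summable_aux (q := y^2) (by positivity) (sq_lt_one hy) 8 4) ?_
  intro n
  rw [Real.norm_eq_abs, abs_mul, abs_mul, abs_mul]
  have h1 : |y ^ (2*n)| ≤ (y^2)^n := by
    rw [abs_pow]
    calc |y| ^ (2*n) = (y^2)^n := by rw [← sq_abs, ← pow_mul]
      _ ≤ (y^2)^n := le_rfl
  have h2 : |bc n| ≤ 1 := by rw [abs_of_pos (bc_pos n)]; exact bc_le_one n
  have h3 : |(2*(n:ℝ)+1)| = 2*(n:ℝ)+1 := abs_of_pos (by positivity)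
  calc |(4:ℝ)| * |2*(n:ℝ)+1| * |bc n| * |y ^ (2*n)|
      ≤ 4 * (2*(n:ℝ)+1) * 1 * (y^2)^n := by
        rw [abs_of_pos (by norm_num : (0:ℝ) < 4), h3]
        refine mul_le_mul (mul_le_mul_of_nonneg_left h2 (by positivity)) h1 (abs_nonneg _)
          (by positivity)
    _ = (8 * n + 4) * (y^2)^n := by ring

lemma G_ode {y : ℝ} (hy : |y| < 1) : (1 - y^2) * G3f y = 4 + y * G2f y := by
  have hS3 : HasSum (fun n : ℕ => 4*(2*(n:ℝ)+1)*bc n*y^(2*n)) (G3f y) := (summable_G3 hy).hasSum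
  have hS2 : HasSum (fun n : ℕ => 4*bc n*y^(2*n+1)) (G2f y) := (summable_G2 hy).hasSum
  have hB : HasSum (fun n : ℕ => y^2 * (4*(2*(n:ℝ)+1)*bc n*y^(2*n))) (y^2 * G3f y) :=
    hS3.mul_left _
  have hC : HasSum (fun n : ℕ => y * (4*bc n*y^(2*n+1))) (y * G2f y) := hS2.mul_left _
  have hshift : HasSum (fun n : ℕ => 4*(2*((n:ℝ)+1)+1)*bc (n+1)*y^(2*(n+1)))
      (G3f y - ∑ i ∈ Finset.range 1, 4*(2*(i:ℝ)+1)*bc i*y^(2*i)) := by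
    have := (hasSum_nat_add_iff' (f := fun n : ℕ => 4*(2*(n:ℝ)+1)*bc n*y^(2*n)) 1).mpr hS3
    convert this using 2 <;> push_cast <;> rfl
  have hsum0 : (∑ i ∈ Finset.range 1, 4*(2*(i:ℝ)+1)*bc i*y^(2*i)) = 4 := by
    simp [bc_zero]
  rw [hsum0] at hshift
  have hfun : (fun n : ℕ => 4*(2*((n:ℝ)+1)+1)*bc (n+1)*y^(2*(n+1)))
      = fun n : ℕ => y^2 * (4*(2*(n:ℝ)+1)*bc n*y^(2*n)) + y * (4*bc n*y^(2*n+1)) := by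
    funext n
    have h := bc_rec n
    rw [show 2*(n+1) = 2*n+1+1 from by omega, pow_succ, pow_succ]
    push_cast
    linear_combination (4 * (y^(2*n) * y * y)) * h
  rw [hfun] at hshift
  have := hshift.unique (hB.add hC)
  linear_combination this

lemma G2f_zero : G2f 0 = 0 := by
  unfold G2f
  have : ∀ n : ℕ, 4 * bc n * (0:ℝ) ^ (2*n+1) = 0 := fun n => by simp [pow_succ]
  rw [tsum_congr this, tsum_zero]

lemma G1f_zero : G1f 0 = 0 := by
  unfold G1f
  have : ∀ n : ℕ, (2*(n:ℝ)+3) * ac n * (0:ℝ) ^ (2*n+2) = 0 := fun n => by simp [pow_succ]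
  rw [tsum_congr this, tsum_zero]

lemma Gf_zero : Gf 0 = 0 := by
  unfold Gf
  have : ∀ n : ℕ, ac n * (0:ℝ) ^ (2*n+3) = 0 := fun n => by simp [pow_succ]
  rw [tsum_congr this, tsum_zero]

lemma hasDerivAt_sqrt_one_sub_sq {y : ℝ} (hy : |y| < 1) :
    HasDerivAt (fun t : ℝ => Real.sqrt (1 - t^2)) (-y / Real.sqrt (1 - y^2)) y := by
  have hy2 : 0 < 1 - y^2 := by nlinarith [sq_abs y, abs_nonneg y]
  have hne : Real.sqrt (1-y^2) ≠ 0 := by positivity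
  have hq : HasDerivAt (fun t : ℝ => 1 - t^2) (-(2*y)) y := by
    simpa using ((hasDerivAt_pow 2 y).const_sub 1)
  have hs := (Real.hasDerivAt_sqrt (ne_of_gt hy2)).comp y hq
  refine hs.congr_deriv (Eq.symm ?_)
  field_simp

lemma W_deriv {y : ℝ} (hy : |y| < 1) :
    HasDerivAt (fun t : ℝ => Real.sqrt (1 - t^2) * G2f t) (4 / Real.sqrt (1 - y^2)) y := by
  have hy2 : 0 < 1 - y^2 := by nlinarith [sq_abs y, abs_nonneg y]
  have hne : Real.sqrt (1-y^2) ≠ 0 := by positivity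
  have hsq : Real.sqrt (1-y^2) ^ 2 = 1 - y^2 := Real.sq_sqrt hy2.le
  have h := (hasDerivAt_sqrt_one_sub_sq hy).mul (hasDerivAt_G2f hy)
  refine h.congr_deriv (Eq.symm ?_)
  have hode := G_ode hy
  field_simp
  linear_combination -hode - G3f y * hsq

lemma abs_lt_one_of_Icc {b z : ℝ} (hb0 : 0 ≤ b) (hb1 : b < 1) (hz : z ∈ Set.Icc 0 b) :
    |z| < 1 := by
  rcases hz with ⟨h1, h2⟩
  rw [abs_of_nonneg h1]; linarith

lemma G2_eq {y : ℝ} (h0 : 0 ≤ y) (h1 : y < 1) :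
    Real.sqrt (1 - y^2) * G2f y = 4 * Real.arcsin y := by
  have key := eq_of_has_deriv_right_eq (a := 0) (b := y)
    (f := fun t : ℝ => Real.sqrt (1 - t^2) * G2f t)
    (f' := fun z : ℝ => 4 / Real.sqrt (1 - z^2))
    (g := fun t : ℝ => 4 * Real.arcsin t)
    (fun z hz => (W_deriv (abs_lt_one_of_Icc h0 h1 ⟨hz.1, hz.2.le.trans (le_refl y)⟩)).hasDerivWithinAt)
    (fun z hz => by
      have hzy : |z| < 1 := abs_lt_one_of_Icc h0 h1 ⟨hz.1, hz.2.le⟩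
      have ha := Real.hasDerivAt_arcsin (x := z)
        (by intro he; rw [he] at hzy; norm_num at hzy)
        (by intro he; rw [he] at hzy; norm_num at hzy)
      have := ha.const_mul (4:ℝ)
      convert this.hasDerivWithinAt using 1
      ring)
    (fun z hz => ((W_deriv (abs_lt_one_of_Icc h0 h1 hz)).continuousAt).continuousWithinAt)
    (fun z hz => by
      have hzy : |z| < 1 := abs_lt_one_of_Icc h0 h1 hz
      have ha := Real.hasDerivAt_arcsin (x := z)
        (by intro he; rw [he] at hzy; norm_num at hzy)
        (by intro he; rw [he] at hzy; norm_num at hzy)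
      exact ((ha.const_mul (4:ℝ)).continuousAt).continuousWithinAt)
    (by simp [G2f_zero])
  have := key y ⟨h0, le_refl y⟩
  simpa using this

lemma arcsin_sq_deriv {z : ℝ} (hz : |z| < 1) :
    HasDerivAt (fun t : ℝ => 2 * Real.arcsin t ^ 2)
      (4 * Real.arcsin z / Real.sqrt (1 - z^2)) z := by
  have ha := Real.hasDerivAt_arcsin (x := z)
    (by intro he; rw [he] at hz; norm_num at hz)
    (by intro he; rw [he] at hz; norm_num at hz)
  have h := (ha.pow 2).const_mul (2:ℝ)
  refine h.congr_deriv (Eq.symm ?_)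
  field_simp
  ring

lemma G1_eq {y : ℝ} (h0 : 0 ≤ y) (h1 : y < 1) : G1f y = 2 * Real.arcsin y ^ 2 := by
  have key := eq_of_has_deriv_right_eq (a := 0) (b := y)
    (f := G1f) (f' := fun z : ℝ => G2f z) (g := fun t : ℝ => 2 * Real.arcsin t ^ 2)
    (fun z hz => (hasDerivAt_G1f (abs_lt_one_of_Icc h0 h1 ⟨hz.1, hz.2.le⟩)).hasDerivWithinAt)
    (fun z hz => by
      have hzy : |z| < 1 := abs_lt_one_of_Icc h0 h1 ⟨hz.1, hz.2.le⟩
      have hz0 : (0:ℝ) ≤ z := hz.1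
      have hz1 : z < 1 := lt_of_lt_of_le (lt_of_abs_lt hzy) le_rfl
      have hsq : (0:ℝ) < 1 - z^2 := by nlinarith [sq_abs z, abs_nonneg z]
      have hne : Real.sqrt (1-z^2) ≠ 0 := by positivity
      have hG2 : G2f z = 4 * Real.arcsin z / Real.sqrt (1 - z^2) := by
        have := G2_eq hz0 hz1
        field_simp at this ⊢
        linarith [this]
      show HasDerivWithinAt _ (G2f z) _ _
      rw [hG2]
      exact (arcsin_sq_deriv hzy).hasDerivWithinAt)
    (fun z hz => ((hasDerivAt_G1f (abs_lt_one_of_Icc h0 h1 hz)).continuousAt).continuousWithinAt)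
    (fun z hz => ((arcsin_sq_deriv (abs_lt_one_of_Icc h0 h1 hz)).continuousAt).continuousWithinAt)
    (by simp [G1f_zero])
  simpa using key y ⟨h0, le_refl y⟩

lemma F_deriv {y : ℝ} (hy : |y| < 1) :
    HasDerivAt
      (fun t : ℝ => -2 * t + 2 * Real.sqrt (1 - t ^ 2) * Real.arcsin t + t * Real.arcsin t ^ 2)
      (Real.arcsin y ^ 2) y := by
  have hy2 : 0 < 1 - y^2 := by nlinarith [sq_abs y, abs_nonneg y]
  have hne : Real.sqrt (1-y^2) ≠ 0 := by positivity
  have hsq : Real.sqrt (1-y^2) ^ 2 = 1 - y^2 := Real.sq_sqrt hy2.le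
  have ha := Real.hasDerivAt_arcsin (x := y)
    (by intro he; rw [he] at hy; norm_num at hy)
    (by intro he; rw [he] at hy; norm_num at hy)
  have h1 : HasDerivAt (fun t : ℝ => -2 * t) (-2 : ℝ) y := by
    simpa using (hasDerivAt_id y).const_mul (-2:ℝ)
  have hs2 : HasDerivAt (fun t : ℝ => 2 * Real.sqrt (1 - t^2))
      (2 * (-y / Real.sqrt (1 - y^2))) y := (hasDerivAt_sqrt_one_sub_sq hy).const_mul 2
  have h2 := hs2.mul ha
  have h3 := (hasDerivAt_id y).mul (ha.pow 2)
  have hmain := (h1.add h2).add h3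
  refine hmain.congr_deriv (Eq.symm ?_)
  simp only [id, Pi.pow_apply]
  field_simp
  ring_nf

theorem stmt_19 (x : ℝ) (hx : 0 < x ∧ x < 1) :
    HasDerivAt
        (fun t : ℝ =>
          -2 * t + 2 * Real.sqrt (1 - t ^ 2) * Real.arcsin t + t * Real.arcsin t ^ 2)
        (Real.arcsin x ^ 2) x ∧
      -2 * x + 2 * Real.sqrt (1 - x ^ 2) * Real.arcsin x + x * Real.arcsin x ^ 2 =
        (1 / 2) * ∑' n : ℕ,
          (4 : ℝ) ^ (n + 1) * x ^ (2 * n + 3) /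
            ((2 * n + 3) * (2 * n + 2) * (2 * n + 1) * (Nat.choose (2 * n) n)) := by
  obtain ⟨hx0, hx1⟩ := hx
  have hax : |x| < 1 := by rw [abs_of_pos hx0]; exact hx1
  refine ⟨F_deriv hax, ?_⟩
  have key := eq_of_has_deriv_right_eq (a := 0) (b := x)
    (f := fun t : ℝ =>
      -2 * t + 2 * Real.sqrt (1 - t ^ 2) * Real.arcsin t + t * Real.arcsin t ^ 2)
    (f' := fun z : ℝ => Real.arcsin z ^ 2)
    (g := fun t : ℝ => (1/2) * Gf t)
    (fun z hz => (F_deriv (abs_lt_one_of_Icc hx0.le hx1 ⟨hz.1, hz.2.le⟩)).hasDerivWithinAt)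
    (fun z hz => by
      have hzy : |z| < 1 := abs_lt_one_of_Icc hx0.le hx1 ⟨hz.1, hz.2.le⟩
      have h := (hasDerivAt_Gf hzy).const_mul (1/2 : ℝ)
      have he : (1/2 : ℝ) * G1f z = Real.arcsin z ^ 2 := by
        rw [G1_eq hz.1 (lt_of_abs_lt hzy)]; ring
      rw [he] at h
      exact h.hasDerivWithinAt)
    (fun z hz =>
      ((F_deriv (abs_lt_one_of_Icc hx0.le hx1 hz)).continuousAt).continuousWithinAt)
    (fun z hz =>
      (((hasDerivAt_Gf (abs_lt_one_of_Icc hx0.le hx1 hz)).const_mul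
        (1/2 : ℝ)).continuousAt).continuousWithinAt)
    (by simp [Gf_zero])
  have hfx := key x ⟨hx0.le, le_refl x⟩
  rw [hfx]
  congr 1
  unfold Gf
  refine tsum_congr fun n => ?_
  unfold ac
  rw [Nat.centralBinom_eq_two_mul_choose]
  ring
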